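/- There exists a connected graph H (self-loops allowed) whose number of vertices is prime such that the disjoint union H ⊔ H is isomorphic to K₂ ⊗ H, where K₂ is the loopless graph on two vertices with a single edge. Since K₂ is not isomorphic to D₂ and also H ⊔ H ≅ D₂ ⊗ H, the graph H ⊔ H admits two factorizations into a 2-vertex factor and an |H|-vertex factor whose 2-vertex factors are not isomorphic to each other. -/

import Mathlib

open Kronecker

/-- Graph isomorphism between adjacency relations. -/
def IsIso {V₁ : Type*} {V₂ : Type*} (A₁ : V₁ → V₁ → Prop) (A₂ : V₂ → V₂ → Prop) : Prop :=
  ∃ e : V₁ ≃ V₂, ∀ u v, A₁ u v ↔ A₂ (e u) (e v)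

/-- Connectedness: the reflexive-transitive closure relates every pair of vertices. -/
def Conn {V : Type*} (A : V → V → Prop) : Prop :=
  ∀ u v : V, Relation.ReflTransGen A u v

/-- Bipartiteness via a 2-coloring. -/
def Bipartite {V : Type*} (A : V → V → Prop) : Prop :=
  ∃ c : V → Bool, ∀ u v, A u v → c u ≠ c v

/-- Direct (Kronecker/tensor/cardinal) product of graphs. -/
def DProd {V₁ : Type*} {V₂ : Type*} (A₁ : V₁ → V₁ → Prop) (A₂ : V₂ → V₂ → Prop) :
    V₁ × V₂ → V₁ × V₂ → Prop :=
  fun p q => A₁ p.1 q.1 ∧ A₂ p.2 q.2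

/-- Disjoint union of graphs. -/
def DUnion {V₁ : Type*} {V₂ : Type*} (A₁ : V₁ → V₁ → Prop) (A₂ : V₂ → V₂ → Prop) :
    V₁ ⊕ V₂ → V₁ ⊕ V₂ → Prop
  | Sum.inl u, Sum.inl v => A₁ u v
  | Sum.inr u, Sum.inr v => A₂ u v
  | _, _ => False

/-- A graph is composite w.r.t. the direct product if it is isomorphic to a direct
product of graphs each having at least two vertices. -/
def Composite {V : Type*} (A : V → V → Prop) : Prop :=
  ∃ (V₁ V₂ : Type) (A₁ : V₁ → V₁ → Prop) (A₂ : V₂ → V₂ → Prop),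
    Symmetric A₁ ∧ Symmetric A₂ ∧
    2 ≤ Nat.card V₁ ∧ 2 ≤ Nat.card V₂ ∧
    IsIso A (DProd A₁ A₂)

/-- Number of edges (unordered pairs, loops included). -/
noncomputable def numEdges {V : Type*} {A : V → V → Prop} (h : Symmetric A) : ℕ :=
  (Sym2.fromRel (⟨fun _ _ hab => h hab⟩ : Std.Symm A)).ncard

/-- Number of loops. -/
noncomputable def numLoops {V : Type*} (A : V → V → Prop) : ℕ :=
  {u : V | A u u}.ncard

/-- The class 𝒢 of the paper. -/
def InClassG {n : ℕ} {A : Fin n → Fin n → Prop} (h : Symmetric A) : Prop :=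
  Conn A ∧ ¬ Bipartite A ∧ n.Prime ∧
  numLoops A < numEdges h ∧
  ¬ 2 ∣ (2 * numEdges h - numLoops A) ∧
  ¬ 3 ∣ (2 * numEdges h - numLoops A)
/-- `K₂`: the graph on two vertices whose only edge joins the two vertices (no loops). -/
def K2Adj : Fin 2 → Fin 2 → Prop := fun i j => i ≠ j

/-- `D₂`: the graph on two vertices with a loop at each vertex and no other edge. -/
def D2Adj : Fin 2 → Fin 2 → Prop := fun i j => i = j

/-- There exists a connected graph `H` (self-loops allowed) with a
prime number of vertices such that `H ⊔ H ≅ K₂ ⊗ H`.  Since `K₂ ≇ D₂` and also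
`H ⊔ H ≅ D₂ ⊗ H`, the graph `H ⊔ H` admits two factorizations into a 2-vertex factor
and an `|H|`-vertex factor whose 2-vertex factors are not isomorphic. -/

def e1 : Fin 2 ⊕ Fin 2 ≃ Fin 2 × Fin 2 where
  toFun s := match s with | .inl x => (x, x) | .inr x => (x, x + 1)
  invFun p := if p.1 = p.2 then .inl p.1 else .inr p.1
  left_inv := by decide
  right_inv := by decide

def e2 : Fin 2 ⊕ Fin 2 ≃ Fin 2 × Fin 2 where
  toFun s := match s with | .inl x => (0, x) | .inr x => (1, x)
  invFun p := if p.1 = 0 then .inl p.2 else .inr p.2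
  left_inv := by decide
  right_inv := by decide

theorem stmt11 :
    ∃ (p : ℕ) (A : Fin p → Fin p → Prop), Symmetric A ∧ Conn A ∧ p.Prime ∧
      IsIso (DUnion A A) (DProd K2Adj A) ∧
      IsIso (DUnion A A) (DProd D2Adj A) ∧
      ¬ IsIso K2Adj D2Adj := by
  refine ⟨2, K2Adj, ?_, ?_, Nat.prime_two, ⟨e1, ?_⟩, ⟨e2, ?_⟩, ?_⟩
  · intro u v h; exact fun h' => h h'.symm
  · intro u v
    by_cases h : u = v
    · exact h ▸ Relation.ReflTransGen.refl
    · exact Relation.ReflTransGen.single h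
  · rintro (u | u) (v | v) <;>
      simp only [DUnion, DProd, K2Adj, e1, Equiv.coe_fn_mk] <;> revert u v <;> decide
  · rintro (u | u) (v | v) <;>
      simp only [DUnion, DProd, D2Adj, K2Adj, e2, Equiv.coe_fn_mk] <;> revert u v <;> decide
  · rintro ⟨e, he⟩
    have := (he 0 0).mpr rfl
    exact this rfl
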